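/- arXiv:1210.1292 — 4 statements merged into one kernel-verified Lean document; each statement's English description precedes it below -/
import Mathlib

section
/- The absolute value of the determinant of the 2n×2n tridiagonal matrix T_{2n} with zero diagonal and off-diagonals a_1, ..., a_{2n-1} equals the square of the product a_1 · a_3 · a_5 ⋯ a_{2n-1} of the odd-indexed entries; equivalently, det T_{2n} = (−1)^n · ∏_{k=1}^n a_{2k-1}^2. -/
/-- The m×m symmetric tridiagonal matrix with zero main diagonal and
off-diagonal entries `(T)_{k,k+1} = (T)_{k+1,k} = a k` (1-indexed `a`). -/
def tridiag (a : ℕ → ℝ) (m : ℕ) : Matrix (Fin m) (Fin m) ℝ :=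
  Matrix.of fun i j =>
    if (i : ℕ) + 1 = (j : ℕ) then a ((i : ℕ) + 1)
    else if (j : ℕ) + 1 = (i : ℕ) then a ((j : ℕ) + 1)
    else 0

lemma tridiag_rec (a : ℕ → ℝ) (m : ℕ) :
    (tridiag a (m + 2)).det = -(a (m + 1))^2 * (tridiag a m).det := by
  rw [Matrix.det_succ_row _ (Fin.last (m + 1))]
  rw [Finset.sum_eq_single (⟨m, by omega⟩ : Fin (m + 2))]
  · rw [Matrix.det_succ_column _ (Fin.last m)]
    rw [Finset.sum_eq_single (Fin.last m)]
    · have e1 : (tridiag a (m + 2)) (Fin.last (m + 1)) ⟨m, by omega⟩ = a (m + 1) := by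
        simp only [tridiag, Matrix.of_apply, Fin.last]
        rw [if_neg (by omega)]; simp
      have e2 : (tridiag a (m + 2)).submatrix (Fin.last (m + 1)).succAbove
          ((⟨m, by omega⟩ : Fin (m + 2)).succAbove) (Fin.last m) (Fin.last m) = a (m + 1) := by
        simp [tridiag, Matrix.submatrix, Fin.succAbove, Fin.last, Fin.lt_def, Fin.castSucc,
          Fin.castAdd, Fin.castLE]
      have e3 : (((tridiag a (m + 2)).submatrix (Fin.last (m + 1)).succAbove
          ((⟨m, by omega⟩ : Fin (m + 2)).succAbove)).submatrix (Fin.last m).succAbove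
          (Fin.last m).succAbove) = tridiag a m := by
        ext i j
        simp [tridiag, Matrix.submatrix, Fin.succAbove, Fin.last, Fin.lt_def, Fin.castSucc,
          Fin.castAdd, Fin.castLE, i.isLt, j.isLt]
      rw [e1, e2, e3]
      simp [Fin.last, pow_succ]
      ring
    · intro i _ hi
      have : (tridiag a (m + 2)).submatrix (Fin.last (m + 1)).succAbove
          ((⟨m, by omega⟩ : Fin (m + 2)).succAbove) i (Fin.last m) = 0 := by
        have hiv : (i : ℕ) < m := by
          rcases lt_or_eq_of_le (Nat.lt_succ_iff.mp i.isLt) with h | h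
          · exact h
          · exact absurd (Fin.ext h : i = Fin.last m) hi
        simp only [tridiag, Matrix.submatrix_apply, Matrix.of_apply, Fin.succAbove,
          Fin.lt_def, Fin.val_last, Fin.coe_castSucc]
        simp only [lt_irrefl, if_false, i.isLt, if_true, Fin.coe_castSucc, Fin.val_succ,
          Fin.val_last]
        rw [if_neg (by omega), if_neg (by omega)]
      rw [this]; ring
    · simp
  · intro j _ hj
    have : (tridiag a (m + 2)) (Fin.last (m + 1)) j = 0 := by
      have hjv : (j : ℕ) ≠ m := fun h => hj (Fin.ext h)
      simp only [tridiag, Matrix.of_apply, Fin.last]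
      rw [if_neg (by omega), if_neg (by omega)]
    rw [this]; ring
  · simp

/-- |det T_{2n}| = (a_1 a_3 ⋯ a_{2n-1})², equivalently
det T_{2n} = (−1)^n ∏_{k=1}^n a_{2k-1}².  (Here the product over `k ∈ range n`
of `a (2k+1)` is the product of the odd-indexed entries a_1, a_3, …, a_{2n-1}.) -/
theorem det_tridiag_even (a : ℕ → ℝ) (n : ℕ) :
    |(tridiag a (2 * n)).det| = (∏ k ∈ Finset.range n, a (2 * k + 1)) ^ 2 ∧
    (tridiag a (2 * n)).det = (-1 : ℝ) ^ n * ∏ k ∈ Finset.range n, (a (2 * k + 1)) ^ 2 := by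
  have key : ∀ n, (tridiag a (2 * n)).det
      = (-1 : ℝ) ^ n * ∏ k ∈ Finset.range n, (a (2 * k + 1)) ^ 2 := by
    intro n
    induction n with
    | zero => simp [Matrix.det_fin_zero]
    | succ n ih =>
      have h2 : 2 * (n + 1) = 2 * n + 2 := by ring
      rw [h2, tridiag_rec, ih, Finset.prod_range_succ, pow_succ]
      ring
  refine ⟨?_, key n⟩
  rw [key n, abs_mul, abs_pow, abs_neg, abs_one, one_pow, one_mul,
    abs_of_nonneg (Finset.prod_nonneg fun k _ => sq_nonneg _), ← Finset.prod_pow]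
end

section
/- Let (a_k) be a sequence of positive reals that is eventually nonincreasing, say a_{k+1} ≤ a_k for all k ≥ n₀. Then for every x ∈ ℓ² with ‖x‖ = 1 and every n ≥ n₀, the tail sum satisfies 2·|Σ_{k=n}^∞ a_k x_k x̄_{k+1}| ≤ a_n + a_{n+1}. -/
open scoped ComplexConjugate

/-- For nonneg summable h, the sum of consecutive pairs over even indices
equals the full sum. -/
lemma pair_tsum (h : ℕ → ℝ) (hsm : Summable h) :
    ∑' k : ℕ, (h (2 * k) + h (2 * k + 1)) = ∑' j, h j := by
  have he : Summable fun k => h (2 * k) :=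
    hsm.comp_injective (fun i j hij => by omega)
  have ho : Summable fun k => h (2 * k + 1) :=
    hsm.comp_injective (fun i j hij => by omega)
  rw [Summable.tsum_add he ho, tsum_even_add_odd he ho]

/-- For a positive sequence (a_k) nonincreasing from n₀ on and a unit vector
x ∈ ℓ², the tail sum satisfies 2·|Σ_{k=n}^∞ a_k x_k x̄_{k+1}| ≤ aₙ + a_{n+1}
for every n ≥ n₀. -/
theorem tail_sum_bound (a : ℕ → ℝ) (hpos : ∀ k, 0 < a k) (n₀ : ℕ)
    (hmono : ∀ k, n₀ ≤ k → a (k + 1) ≤ a k)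
    (x : ℕ → ℂ) (hsum : Summable fun k => ‖x k‖ ^ 2)
    (hx : ∑' k, ‖x k‖ ^ 2 = 1) :
    ∀ n, n₀ ≤ n →
      2 * ‖∑' j : ℕ, (a (n + j) : ℂ) * x (n + j) * conj (x (n + j + 1))‖ ≤
        a n + a (n + 1) := by
  intro n hn
  -- monotonicity from n on
  have hmon : ∀ j k, n ≤ j → j ≤ k → a k ≤ a j := by
    intro j k hj hk
    obtain ⟨d, rfl⟩ := Nat.exists_eq_add_of_le hk
    induction d with
    | zero => simp
    | succ d ih =>
      have h1 : a (j + d + 1) ≤ a (j + d) := hmono (j + d) (by omega)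
      have h2 : j + (d + 1) = j + d + 1 := by omega
      rw [h2]
      exact h1.trans (ih (by omega))
  -- the tail squared-norm sequence
  set h : ℕ → ℝ := fun j => ‖x (n + j)‖ ^ 2 with hh
  have hsm : Summable h := by
    have := (summable_nat_add_iff (f := fun k => ‖x k‖ ^ 2) n).2 hsum
    exact this.congr (fun j => by simp [hh, add_comm])
  have hsm1 : Summable fun j => h (j + 1) := (summable_nat_add_iff 1).2 hsm
  have hnn : ∀ j, 0 ≤ h j := fun j => sq_nonneg _
  -- tail sums are ≤ 1
  have htail : ∀ m : ℕ, ∑' j : ℕ, ‖x (m + j)‖ ^ 2 ≤ 1 := by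
    intro m
    have key := Summable.sum_add_tsum_nat_add (f := fun k => ‖x k‖ ^ 2) m hsum
    have hrw : ∑' j : ℕ, ‖x (m + j)‖ ^ 2 = ∑' j : ℕ, ‖x (j + m)‖ ^ 2 := by
      apply tsum_congr; intro j; rw [add_comm]
    have hfin : 0 ≤ ∑ i ∈ Finset.range m, ‖x i‖ ^ 2 :=
      Finset.sum_nonneg fun i _ => sq_nonneg _
    rw [hrw]; rw [hx] at key; linarith
  -- the summand and its bound
  set f : ℕ → ℂ := fun j => (a (n + j) : ℂ) * x (n + j) * conj (x (n + j + 1)) with hf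
  set g : ℕ → ℝ := fun j =>
    (if Even j then a n else a (n + 1)) * (h j + h (j + 1)) with hg
  have hnorm : ∀ j, ‖f j‖ = a (n + j) * (‖x (n + j)‖ * ‖x (n + j + 1)‖) := by
    intro j
    simp [hf, norm_mul, abs_of_pos (hpos (n + j)), mul_assoc, Complex.norm_real]
  have hfg : ∀ j, 2 * ‖f j‖ ≤ g j := by
    intro j
    have hrw : n + j + 1 = n + (j + 1) := by omega
    rw [hnorm j, hrw]
    have hc : a (n + j) ≤ if Even j then a n else a (n + 1) := by
      split_ifs with hj
      · exact hmon n (n + j) le_rfl (by omega)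
      · have h1 : j ≠ 0 := by rintro rfl; exact hj ⟨0, rfl⟩
        exact hmon (n + 1) (n + j) (by omega) (by omega)
    have h2 : 2 * (‖x (n + j)‖ * ‖x (n + (j + 1))‖) ≤ h j + h (j + 1) := by
      simp only [hh]
      nlinarith [sq_nonneg (‖x (n + j)‖ - ‖x (n + (j + 1))‖),
        norm_nonneg (x (n + j)), norm_nonneg (x (n + (j + 1)))]
    have hcx : 0 ≤ if Even j then a n else a (n + 1) := le_trans (hpos (n + j)).le hc
    have hg' : g j = (if Even j then a n else a (n + 1)) * (h j + h (j + 1)) := rfl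
    rw [hg']
    calc 2 * (a (n + j) * (‖x (n + j)‖ * ‖x (n + (j + 1))‖))
        = a (n + j) * (2 * (‖x (n + j)‖ * ‖x (n + (j + 1))‖)) := by ring
      _ ≤ (if Even j then a n else a (n + 1)) * (h j + h (j + 1)) := by
          apply mul_le_mul hc h2 (by positivity) hcx
  -- summabilities
  have hgs : Summable g := by
    apply Summable.of_nonneg_of_le
    · intro j; exact le_trans (by positivity) (hfg j)
    · intro j; exact le_rfl
    · apply Summable.of_nonneg_of_le (fun j => le_trans (by positivity) (hfg j))
        (fun j => ?_) ((hsm.add hsm1).mul_left (a n + a (n + 1)))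
      have hc : (if Even j then a n else a (n + 1)) ≤ a n + a (n + 1) := by
        have := hpos n; have := hpos (n + 1)
        split_ifs <;> linarith
      have hnn2 : 0 ≤ h j + h (j + 1) := by positivity
      exact mul_le_mul_of_nonneg_right hc hnn2
  have hfn : Summable fun j => ‖f j‖ := by
    apply Summable.of_nonneg_of_le (fun j => norm_nonneg _) (fun j => ?_)
      (hgs.mul_left (1/2 : ℝ))
    have := hfg j
    linarith
  have hfs : Summable f := hfn.of_norm
  -- main chain
  have step1 : 2 * ‖∑' j, f j‖ ≤ ∑' j, g j := by
    have h1 : ‖∑' j, f j‖ ≤ ∑' j, ‖f j‖ := norm_tsum_le_tsum_norm hfn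
    have h2 : ∑' j, 2 * ‖f j‖ ≤ ∑' j, g j :=
      Summable.tsum_le_tsum hfg (hfn.mul_left 2) hgs
    rw [tsum_mul_left] at h2
    linarith
  -- compute ∑' g via even/odd split
  have hge : Summable fun k => g (2 * k) := hgs.comp_injective (fun i j => by omega)
  have hgo : Summable fun k => g (2 * k + 1) := hgs.comp_injective (fun i j => by omega)
  have hsplit : ∑' j, g j = (∑' k, g (2 * k)) + ∑' k, g (2 * k + 1) :=
    (tsum_even_add_odd hge hgo).symm
  have heven : ∑' k, g (2 * k) = a n * ∑' j, h j := by
    rw [← pair_tsum h hsm, ← tsum_mul_left]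
    apply tsum_congr; intro k
    simp [hg, even_two_mul k, mul_comm]
  have hodd : ∑' k, g (2 * k + 1) = a (n + 1) * ∑' j, h (j + 1) := by
    have hp := pair_tsum (fun j => h (j + 1)) hsm1
    rw [← hp, ← tsum_mul_left]
    apply tsum_congr; intro k
    have : ¬ Even (2 * k + 1) := by simp [Nat.even_add_one, even_two_mul]
    simp [hg, this]
  -- conclude
  have hT1 : ∑' j, h j ≤ 1 := htail n
  have hT2 : ∑' j, h (j + 1) ≤ 1 := by
    have : ∀ j, h (j + 1) = ‖x ((n + 1) + j)‖ ^ 2 := by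
      intro j
      simp only [hh]
      rw [show n + (j + 1) = (n + 1) + j from by omega]
    calc ∑' j, h (j + 1) = ∑' j, ‖x ((n + 1) + j)‖ ^ 2 := tsum_congr this
      _ ≤ 1 := htail (n + 1)
  have hT1n : 0 ≤ ∑' j, h j := tsum_nonneg hnn
  have hT2n : 0 ≤ ∑' j, h (j + 1) := tsum_nonneg (fun j => hnn _)
  have := hpos n; have := hpos (n + 1)
  calc 2 * ‖∑' j, f j‖ ≤ ∑' j, g j := step1
    _ = a n * ∑' j, h j + a (n + 1) * ∑' j, h (j + 1) := by
        rw [hsplit, heven, hodd]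
    _ ≤ a n + a (n + 1) := by nlinarith
end

section
/- Let J be the Jacobi operator with positive off-diagonal entries (a_n), and let J_n = P_n J P_n where P_n is the orthogonal projection onto the span of e_1, ..., e_n. If a_{k+1} ≤ a_k for all k ≥ n₀, then for all n ≥ n₀, ‖J − J_n‖ ≤ a_n + a_{n+1}. -/
open ContinuousLinearMap

/-- ℓ²(ℕ), with 0-based indexing of coordinates. -/
noncomputable abbrev H2 : Type := lp (fun _ : ℕ => ℂ) 2

/-- The standard basis vectors of ℓ²(ℕ): `e n` corresponds to the paper's e_{n+1}. -/
noncomputable def e (n : ℕ) : H2 := lp.single 2 n 1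

lemma e_apply (i j : ℕ) : (e i : ℕ → ℂ) j = if j = i then 1 else 0 := by
  rw [e, lp.single_apply]
  split_ifs with h
  · subst h; simp
  · simp [h]

lemma hasSum_norm_sq (y : H2) : HasSum (fun i => ‖y i‖ ^ 2) (‖y‖ ^ 2) := by
  have h := lp.hasSum_norm (p := 2) (by norm_num) y
  simpa [Real.rpow_two] using h

lemma coord_eq (y : H2) (j : ℕ) : (inner ℂ (e j) y : ℂ) = y j := by
  rw [e, lp.inner_single_left]
  simp

lemma hasSum_basis (x : H2) : HasSum (fun k => x k • e k) x := by
  have h := lp.hasSum_single (E := fun _ : ℕ => ℂ) (p := 2) ENNReal.ofNat_ne_top x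
  have he : (fun k => x k • e k) = fun k => lp.single 2 k (x k) := by
    funext k
    rw [e, ← lp.single_smul, smul_eq_mul, mul_one]
  rw [he]; exact h

lemma exists_lp_of_bound (x : H2) (c : ℝ) (hc : 0 ≤ c) (u : ℕ → ℂ) (σ : ℕ → ℕ)
    (hσ : Function.Injective σ) (h : ∀ j, ‖u j‖ ≤ c * ‖x (σ j)‖) :
    ∃ U : H2, (∀ j, U j = u j) ∧ ‖U‖ ≤ c * ‖x‖ := by
  have hx := hasSum_norm_sq x
  have hg : HasSum (fun i => (c * ‖x i‖) ^ 2) ((c * ‖x‖) ^ 2) := by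
    simpa [mul_pow] using hx.mul_left (c ^ 2)
  have hb : ∀ j, ‖u j‖ ^ 2 ≤ (c * ‖x (σ j)‖) ^ 2 := fun j =>
    pow_le_pow_left₀ (norm_nonneg _) (h j) 2
  have hsum : Summable fun j => ‖u j‖ ^ 2 :=
    Summable.of_nonneg_of_le (fun j => by positivity) hb (hg.summable.comp_injective hσ)
  have hmem : Memℓp u 2 := memℓp_gen (by simpa [Real.rpow_two] using hsum)
  set U : H2 := ⟨u, hmem⟩ with hUdef
  have hcoe : ∀ j, U j = u j := fun _ => rfl
  have hU := hasSum_norm_sq U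
  have h2 : ‖U‖ ^ 2 ≤ (c * ‖x‖) ^ 2 := by
    refine hasSum_le_inj σ hσ (fun m _ => by positivity) (fun j => ?_) hU hg
    rw [hcoe j]; exact hb j
  exact ⟨U, hcoe, le_of_pow_le_pow_left₀ two_ne_zero (by positivity) h2⟩

lemma De_formula (a : ℕ → ℝ) (J : H2 →L[ℂ] H2)
    (hJ0 : J (e 0) = (a 0 : ℂ) • e 1)
    (hJ : ∀ n : ℕ, J (e (n + 1)) = (a (n + 1) : ℂ) • e (n + 2) + (a n : ℂ) • e n)
    (P : ℕ → H2 →L[ℂ] H2)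
    (hP : ∀ n k, P n (e k) = if k < n then e k else 0) (n k j : ℕ) :
    ((J - P (n + 1) ∘L J ∘L P (n + 1)) (e k) : ℕ → ℂ) j =
      (if n ≤ k ∧ j = k + 1 then (a k : ℂ) else 0) +
        (if n + 1 ≤ k ∧ k = j + 1 then (a j : ℂ) else 0) := by
  have hDk : (J - P (n + 1) ∘L J ∘L P (n + 1)) (e k)
      = J (e k) - P (n + 1) (J (P (n + 1) (e k))) := by
    simp [ContinuousLinearMap.sub_apply, ContinuousLinearMap.comp_apply]
  rcases lt_trichotomy k n with hk | rfl | hk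
  · have hz : (J - P (n + 1) ∘L J ∘L P (n + 1)) (e k) = 0 := by
      rw [hDk, hP, if_pos (by omega)]
      cases k with
      | zero => rw [hJ0, map_smul, hP, if_pos (by omega), sub_self]
      | succ m =>
        rw [hJ, map_add, map_smul, map_smul, hP, hP, if_pos (by omega),
          if_pos (by omega), sub_self]
    rw [hz, lp.coeFn_zero, Pi.zero_apply]
    split_ifs <;> first | (exfalso; omega) | simp
  · have hv : (J - P (k + 1) ∘L J ∘L P (k + 1)) (e k) = (a k : ℂ) • e (k + 1) := by
      rw [hDk, hP, if_pos (by omega)]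
      cases k with
      | zero => rw [hJ0, map_smul, hP, if_neg (by omega), smul_zero, sub_zero]
      | succ m =>
        rw [hJ, map_add, map_smul, map_smul, hP, hP, if_neg (by omega), if_pos (by omega),
          smul_zero, zero_add, add_sub_cancel_right]
    rw [hv, lp.coeFn_smul, Pi.smul_apply, e_apply]
    split_ifs <;> first | (exfalso; omega) | simp
  · have hv : (J - P (n + 1) ∘L J ∘L P (n + 1)) (e k) = J (e k) := by
      rw [hDk, hP, if_neg (by omega), map_zero, map_zero, sub_zero]
    rw [hv]
    obtain ⟨m, rfl⟩ : ∃ m, k = m + 1 := ⟨k - 1, by omega⟩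
    rw [hJ, lp.coeFn_add, Pi.add_apply, lp.coeFn_smul, lp.coeFn_smul, Pi.smul_apply,
      Pi.smul_apply, e_apply, e_apply]
    by_cases hj0 : j = m
    · subst hj0
      split_ifs <;> first | (exfalso; omega) | simp
    · split_ifs <;> first | (exfalso; omega) | simp

/-- For the Jacobi operator J (with J e_n = a_n e_{n+1} + a_{n-1} e_{n-1}, 0-indexed)
and P n the orthogonal projection onto the first n coordinates, if (a_k) is
nonincreasing from n₀ on, then ‖J − P_{n+1} J P_{n+1}‖ ≤ aₙ + a_{n+1} for all n ≥ n₀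
(this is the paper's ‖J − J_m‖ ≤ a_m + a_{m+1}, m = n + 1 in 1-based indexing). -/
theorem jacobi_truncation_bound (a : ℕ → ℝ) (hpos : ∀ n, 0 < a n)
    (hbdd : ∃ C : ℝ, ∀ n, a n ≤ C) (n₀ : ℕ)
    (hmono : ∀ k, n₀ ≤ k → a (k + 1) ≤ a k)
    (J : H2 →L[ℂ] H2)
    (hJ0 : J (e 0) = (a 0 : ℂ) • e 1)
    (hJ : ∀ n : ℕ, J (e (n + 1)) = (a (n + 1) : ℂ) • e (n + 2) + (a n : ℂ) • e n)
    (P : ℕ → H2 →L[ℂ] H2)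
    (hP : ∀ n k, P n (e k) = if k < n then e k else 0) :
    ∀ n, n₀ ≤ n → ‖J - P (n + 1) ∘L J ∘L P (n + 1)‖ ≤ a n + a (n + 1) := by
  have hadd : ∀ d j, n₀ ≤ j → a (j + d) ≤ a j := by
    intro d
    induction d with
    | zero => intro j _; simp
    | succ d ih =>
      intro j hj
      exact le_trans (hmono (j + d) (by omega)) (ih j hj)
  have ha' : ∀ j k : ℕ, n₀ ≤ j → j ≤ k → a k ≤ a j := by
    intro j k hj hjk
    have h := hadd (k - j) j hj
    rwa [Nat.add_sub_cancel' hjk] at h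
  intro n hn
  refine ContinuousLinearMap.opNorm_le_bound _
    (by have := hpos n; have := hpos (n + 1); positivity) fun x => ?_
  -- coordinate formula for (J - P J P) x
  have key : ∀ j, ((J - P (n + 1) ∘L J ∘L P (n + 1)) x : ℕ → ℂ) j =
      (if n + 1 ≤ j then (a (j - 1) : ℂ) * x (j - 1) else 0) +
        (if n ≤ j then (a j : ℂ) * x (j + 1) else 0) := by
    intro j
    have h1 : HasSum (fun k => x k • (J - P (n + 1) ∘L J ∘L P (n + 1)) (e k))
        ((J - P (n + 1) ∘L J ∘L P (n + 1)) x) := by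
      have h := (hasSum_basis x).mapL (J - P (n + 1) ∘L J ∘L P (n + 1))
      simpa [map_smul] using h
    have h2 : HasSum (fun k => x k * ((J - P (n + 1) ∘L J ∘L P (n + 1)) (e k) : ℕ → ℂ) j)
        (((J - P (n + 1) ∘L J ∘L P (n + 1)) x : ℕ → ℂ) j) := by
      have h3 := h1.mapL (innerSL ℂ (e j))
      simpa [inner_smul_right, coord_eq] using h3
    refine h2.unique ?_
    have hfin : ∀ k ∉ ({j - 1, j + 1} : Finset ℕ),
        x k * ((J - P (n + 1) ∘L J ∘L P (n + 1)) (e k) : ℕ → ℂ) j = 0 := by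
      intro k hk
      simp only [Finset.mem_insert, Finset.mem_singleton, not_or] at hk
      rw [De_formula a J hJ0 hJ P hP, if_neg (by omega), if_neg (by omega), add_zero, mul_zero]
    have h4 := hasSum_sum_of_ne_finset_zero (L := SummationFilter.unconditional ℕ) hfin
    have h5 : (∑ k ∈ ({j - 1, j + 1} : Finset ℕ),
        x k * ((J - P (n + 1) ∘L J ∘L P (n + 1)) (e k) : ℕ → ℂ) j) =
        (if n + 1 ≤ j then (a (j - 1) : ℂ) * x (j - 1) else 0) +
          (if n ≤ j then (a j : ℂ) * x (j + 1) else 0) := by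
      rw [Finset.sum_pair (by omega : j - 1 ≠ j + 1),
        De_formula a J hJ0 hJ P hP, De_formula a J hJ0 hJ P hP]
      split_ifs <;> first | (exfalso; omega) | ring
    rw [← h5]
    exact h4
  -- the two "block diagonal" pieces
  obtain ⟨U, hU, hUn⟩ := exists_lp_of_bound x (a n) (le_of_lt (hpos n))
    (fun j => if j < n then 0 else if (j - n) % 2 = 0
      then (a j : ℂ) * x (j + 1) else (a (j - 1) : ℂ) * x (j - 1))
    (fun j => if j < n then j else if (j - n) % 2 = 0 then j + 1 else j - 1)
    (by
      apply Function.Involutive.injective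
      intro j
      dsimp only
      split_ifs <;> omega)
    (by
      intro j
      dsimp only
      split_ifs with h1 h2
      · simp only [norm_zero]
        exact mul_nonneg (hpos n).le (norm_nonneg _)
      · rw [norm_mul, Complex.norm_real, Real.norm_eq_abs, abs_of_pos (hpos j)]
        exact mul_le_mul_of_nonneg_right (ha' n j (by omega) (by omega)) (norm_nonneg _)
      · rw [norm_mul, Complex.norm_real, Real.norm_eq_abs, abs_of_pos (hpos (j - 1))]
        exact mul_le_mul_of_nonneg_right (ha' n (j - 1) (by omega) (by omega)) (norm_nonneg _))
  obtain ⟨V, hV, hVn⟩ := exists_lp_of_bound x (a (n + 1)) (le_of_lt (hpos (n + 1)))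
    (fun j => if j < n + 1 then 0 else if (j - n) % 2 = 0
      then (a (j - 1) : ℂ) * x (j - 1) else (a j : ℂ) * x (j + 1))
    (fun j => if j < n + 1 then j else if (j - n) % 2 = 0 then j - 1 else j + 1)
    (by
      apply Function.Involutive.injective
      intro j
      dsimp only
      split_ifs <;> omega)
    (by
      intro j
      dsimp only
      split_ifs with h1 h2
      · simp only [norm_zero]
        exact mul_nonneg (hpos (n + 1)).le (norm_nonneg _)
      · rw [norm_mul, Complex.norm_real, Real.norm_eq_abs, abs_of_pos (hpos (j - 1))]
        exact mul_le_mul_of_nonneg_right (ha' (n + 1) (j - 1) (by omega) (by omega))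
          (norm_nonneg _)
      · rw [norm_mul, Complex.norm_real, Real.norm_eq_abs, abs_of_pos (hpos j)]
        exact mul_le_mul_of_nonneg_right (ha' (n + 1) j (by omega) (by omega)) (norm_nonneg _))
  have hsplit : (J - P (n + 1) ∘L J ∘L P (n + 1)) x = U + V := by
    apply lp.ext
    funext j
    rw [lp.coeFn_add, Pi.add_apply, hU j, hV j, key j]
    split_ifs <;> first | (exfalso; omega) | ring
  calc ‖(J - P (n + 1) ∘L J ∘L P (n + 1)) x‖ = ‖U + V‖ := by rw [hsplit]
    _ ≤ ‖U‖ + ‖V‖ := norm_add_le U V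
    _ ≤ a n * ‖x‖ + a (n + 1) * ‖x‖ := add_le_add hUn hVn
    _ = (a n + a (n + 1)) * ‖x‖ := by ring
end

section
/- Let (a_n) be positive reals with a_{n+1}/a_n → 0, and for each n let λ_1^{(2n)} ≥ λ_2^{(2n)} ≥ ... ≥ λ_n^{(2n)} > 0 be the positive eigenvalues of the 2n×2n zero-diagonal symmetric tridiagonal matrix T_{2n} with off-diagonals a_1,...,a_{2n-1}, so that ∏_{k=1}^n λ_k^{(2n)} = ∏_{k=1}^n a_{2k-1}. Then the inequality λ_k^{(2k)} ≥ a_{2k-1}/2 holds for infinitely many k ∈ ℕ. -/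
set_option maxHeartbeats 1000000
set_option linter.unnecessarySeqFocus false


open Filter

lemma tridiag_mulVec (a : ℕ → ℝ) (m : ℕ) (v : Fin m → ℝ) (w : ℕ → ℝ)
    (hw : ∀ k (h : k < m), w (k+1) = v ⟨k, h⟩) (hw' : ∀ k, m < k → w k = 0)
    (hw0 : w 0 = 0) (j : Fin m) :
    (tridiag a m).mulVec v j = a ((j:ℕ)+1) * w ((j:ℕ)+2) + a (j:ℕ) * w (j:ℕ) := by
  classical
  have hsplit : ∀ k : Fin m,
      (if ((j:ℕ)+1 = (k:ℕ)) then a ((j:ℕ)+1) else if ((k:ℕ)+1 = (j:ℕ)) then a ((k:ℕ)+1) else 0) * v k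
      = (if ((j:ℕ)+1 = (k:ℕ)) then a ((j:ℕ)+1) * v k else 0)
        + (if ((k:ℕ)+1 = (j:ℕ)) then a ((k:ℕ)+1) * v k else 0) := by
    intro k
    by_cases h1 : (j:ℕ)+1 = (k:ℕ) <;> by_cases h2 : (k:ℕ)+1 = (j:ℕ) <;>
      simp [h1, h2] <;> omega
  have hmv : (tridiag a m).mulVec v j
      = ∑ k : Fin m, (if ((j:ℕ)+1 = (k:ℕ)) then a ((j:ℕ)+1) else if ((k:ℕ)+1 = (j:ℕ)) then a ((k:ℕ)+1) else 0) * v k := by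
    simp [Matrix.mulVec, dotProduct, tridiag]
  rw [hmv, Finset.sum_congr rfl (fun k _ => hsplit k), Finset.sum_add_distrib]
  have hS1 : (∑ k : Fin m, if ((j:ℕ)+1 = (k:ℕ)) then a ((j:ℕ)+1) * v k else 0)
      = a ((j:ℕ)+1) * w ((j:ℕ)+2) := by
    by_cases hj : (j:ℕ)+1 < m
    · rw [Finset.sum_eq_single (⟨(j:ℕ)+1, hj⟩ : Fin m)]
      · rw [if_pos rfl, hw ((j:ℕ)+1) hj]
      · intro b _ hb
        rw [if_neg]
        intro hc
        exact hb (Fin.ext (by simp; omega))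
      · intro h; exact absurd (Finset.mem_univ _) h
    · rw [Finset.sum_eq_zero, hw' ((j:ℕ)+2) (by omega), mul_zero]
      intro b _
      rw [if_neg]
      have := b.isLt
      omega
  have hS2 : (∑ k : Fin m, if ((k:ℕ)+1 = (j:ℕ)) then a ((k:ℕ)+1) * v k else 0)
      = a (j:ℕ) * w (j:ℕ) := by
    by_cases hj0 : (j:ℕ) = 0
    · rw [Finset.sum_eq_zero, hj0, hw0, mul_zero]
      intro b _
      rw [if_neg]
      omega
    · have hlt : (j:ℕ)-1 < m := by have := j.isLt; omega
      rw [Finset.sum_eq_single (⟨(j:ℕ)-1, hlt⟩ : Fin m)]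
      · rw [if_pos (by simp; omega)]
        have : w ((j:ℕ)-1+1) = v ⟨(j:ℕ)-1, hlt⟩ := hw _ hlt
        have e : (j:ℕ)-1+1 = (j:ℕ) := by omega
        rw [e] at this
        rw [this]
        have e2 : ((⟨(j:ℕ)-1, hlt⟩ : Fin m) : ℕ) + 1 = (j:ℕ) := by simp; omega
        rw [e2]
      · intro b _ hb
        rw [if_neg]
        intro hc
        exact hb (Fin.ext (by simp; omega))
      · intro h; exact absurd (Finset.mem_univ _) h
  rw [hS1, hS2]

lemma sum_range_pair (f : ℕ → ℝ) (n : ℕ) :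
    ∑ j ∈ Finset.range (2*n), f j = ∑ i ∈ Finset.range n, (f (2*i) + f (2*i+1)) := by
  induction n with
  | zero => simp
  | succ n ih =>
    rw [Finset.sum_range_succ, ← ih, show 2*(n+1) = 2*n+1+1 by ring,
      Finset.sum_range_succ, Finset.sum_range_succ]
    ring

lemma scalar_key (a : ℕ → ℝ) (N n : ℕ) (C D μ : ℝ) (w : ℕ → ℝ)
    (hpos : ∀ j, 1 ≤ j → 0 < a j)
    (hdec : ∀ k, N ≤ k → a (k+1) ≤ a k / 8)
    (hC : ∀ i, i < N → a (2*i+2) ≤ C * a (2*i+1)) (hC0 : 0 ≤ C)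
    (hD : ∀ i, i < N → (a (2*i+1))⁻¹ ≤ D)
    (hN : 1 ≤ N) (hn : N + 1 ≤ n)
    (hμ : 0 < μ) (hμA : μ ≤ a (2*n-1) / 2)
    (hsmall : (N:ℝ) * (C+1)^N * (D * a (2*n-1) + (1/4:ℝ)^(n-1-N)) ≤ 1/15)
    (hw0 : w 0 = 0) (hwm : ∀ k, 2*n < k → w k = 0)
    (hE : ∀ J, 1 ≤ J → J ≤ 2*n → μ * w J = a J * w (J+1) + a (J-1) * w (J-1))
    (hwne : ∃ J, 1 ≤ J ∧ J ≤ 2*n ∧ w J ≠ 0) : False := by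
  have hA : 0 < a (2*n-1) := hpos _ (by omega)
  set A := a (2*n-1) with hAdef
  -- chain decay
  have hchain : ∀ k, N ≤ k → ∀ s, a (k+s) ≤ (1/8:ℝ)^s * a k := by
    intro k hk s
    induction s with
    | zero => simp
    | succ s ih =>
      have h1 : a (k+s+1) ≤ a (k+s) / 8 := hdec _ (by omega)
      have h2 : a (k+s) / 8 ≤ ((1/8:ℝ)^s * a k) / 8 := by linarith
      calc a (k+(s+1)) = a (k+s+1) := by ring_nf
        _ ≤ ((1/8:ℝ)^s * a k) / 8 := le_trans h1 h2
        _ = (1/8:ℝ)^(s+1) * a k := by ring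
  -- Y bound
  set SY := ∑ i ∈ Finset.range n, (w (2*i+2))^2 with hSYdef
  have hSY0 : 0 ≤ SY := Finset.sum_nonneg fun i _ => sq_nonneg _
  set Yb := Real.sqrt SY with hYbdef
  have hYb0 : 0 ≤ Yb := Real.sqrt_nonneg _
  have hYb2 : Yb^2 = SY := Real.sq_sqrt hSY0
  have hYle : ∀ i, i < n → |w (2*i+2)| ≤ Yb := by
    intro i hi
    rw [← Real.sqrt_sq_eq_abs]
    exact Real.sqrt_le_sqrt (Finset.single_le_sum (f := fun i => (w (2*i+2))^2)
      (fun i _ => sq_nonneg _) (Finset.mem_range.mpr hi))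
  have hμY : 0 ≤ μ * Yb := mul_nonneg hμ.le hYb0
  -- the basic recursion bound
  have habs : ∀ i, i < n →
      |w (2*i+1)| ≤ (μ * Yb + a (2*i+2) * |w (2*i+3)|) / a (2*i+1) := by
    intro i hi
    have hE' := hE (2*i+2) (by omega) (by omega)
    have e1 : 2*i+2-1 = 2*i+1 := by omega
    rw [e1] at hE'
    have ha1 : 0 < a (2*i+1) := hpos _ (by omega)
    have ha2 : 0 < a (2*i+2) := hpos _ (by omega)
    rw [le_div_iff₀ ha1]
    have e2 : 2*i+2+1 = 2*i+3 := by omega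
    rw [e2] at hE'
    calc |w (2*i+1)| * a (2*i+1) = |a (2*i+1) * w (2*i+1)| := by
          rw [abs_mul, abs_of_pos ha1]; ring
      _ = |μ * w (2*i+2) - a (2*i+2) * w (2*i+3)| := by
          congr 1; linarith
      _ ≤ |μ * w (2*i+2)| + |a (2*i+2) * w (2*i+3)| := abs_sub _ _
      _ = μ * |w (2*i+2)| + a (2*i+2) * |w (2*i+3)| := by
          rw [abs_mul, abs_mul, abs_of_pos hμ, abs_of_pos ha2]
      _ ≤ μ * Yb + a (2*i+2) * |w (2*i+3)| := by
          have := hYle i hi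
          have h := mul_le_mul_of_nonneg_left this hμ.le
          linarith
  -- late region bound
  have hlate : ∀ d, d ≤ n-1-N → |w (2*(n-1-d)+1)| ≤ (1/4:ℝ)^d * (μ * Yb / A) := by
    intro d
    induction d with
    | zero =>
      intro _
      have h0 := habs (n-1) (by omega)
      have e1 : 2*(n-1)+1 = 2*n-1 := by omega
      have e2 : 2*(n-1)+3 = 2*n+1 := by omega
      rw [e1, e2, hwm (2*n+1) (by omega)] at h0
      rw [show 2*(n-1-0)+1 = 2*n-1 from by omega]
      simpa using h0
    | succ d ih =>
      intro hd1
      have ihb := ih (by omega)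
      set i := n-1-(d+1) with hidef
      have hiN : N ≤ i := by omega
      have hilt : i < n := by omega
      have h0 := habs i hilt
      have hr : a (2*i+2) ≤ a (2*i+1) / 8 := by
        have := hdec (2*i+1) (by omega)
        rwa [show 2*i+1+1 = 2*i+2 from by omega] at this
      have hchainA : A ≤ (1/8:ℝ)^(2*(d+1)) * a (2*i+1) := by
        have := hchain (2*i+1) (by omega) (2*(d+1))
        rwa [show 2*i+1+2*(d+1) = 2*n-1 from by omega] at this
      have hx1 : |w (2*i+3)| ≤ (1/4:ℝ)^d * (μ * Yb / A) := by
        rw [show 2*i+3 = 2*(n-1-d)+1 from by omega]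
        exact ihb
      have ha1 : 0 < a (2*i+1) := hpos _ (by omega)
      have hstep : (μ * Yb + a (2*i+2) * |w (2*i+3)|) / a (2*i+1)
          ≤ (1/8:ℝ)^(2*(d+1)) * (μ*Yb/A) + (1/8) * ((1/4:ℝ)^d * (μ*Yb/A)) := by
        have t1 : μ * Yb / a (2*i+1) ≤ (1/8:ℝ)^(2*(d+1)) * (μ*Yb/A) := by
          rw [div_le_iff₀ ha1]
          have h2 := mul_le_mul_of_nonneg_right hchainA (show 0 ≤ μ*Yb/A by positivity)
          calc μ * Yb = A * (μ*Yb/A) := by field_simp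
            _ ≤ ((1/8:ℝ)^(2*(d+1)) * a (2*i+1)) * (μ*Yb/A) := h2
            _ = (1/8:ℝ)^(2*(d+1)) * (μ*Yb/A) * a (2*i+1) := by ring
        have t2 : a (2*i+2) * |w (2*i+3)| / a (2*i+1) ≤ (1/8) * ((1/4:ℝ)^d * (μ*Yb/A)) := by
          rw [div_le_iff₀ ha1]
          have hxnn : 0 ≤ |w (2*i+3)| := abs_nonneg _
          calc a (2*i+2) * |w (2*i+3)| ≤ (a (2*i+1)/8) * |w (2*i+3)| :=
                mul_le_mul_of_nonneg_right hr hxnn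
            _ ≤ (a (2*i+1)/8) * ((1/4:ℝ)^d * (μ*Yb/A)) :=
                mul_le_mul_of_nonneg_left hx1 (by positivity)
            _ = 1/8 * ((1/4:ℝ)^d * (μ*Yb/A)) * a (2*i+1) := by ring
        calc (μ * Yb + a (2*i+2) * |w (2*i+3)|) / a (2*i+1)
            = μ*Yb/a (2*i+1) + a (2*i+2) * |w (2*i+3)| / a (2*i+1) := by ring
          _ ≤ _ := add_le_add t1 t2
      have hnum : (1/8:ℝ)^(2*(d+1)) * (μ*Yb/A) + (1/8) * ((1/4:ℝ)^d * (μ*Yb/A))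
          ≤ (1/4:ℝ)^(d+1) * (μ*Yb/A) := by
        have hp : (0:ℝ) ≤ (1/4:ℝ)^d := by positivity
        have h64 : (1/8:ℝ)^(2*(d+1)) = (1/64:ℝ)^d * (1/64:ℝ) := by
          rw [pow_mul]
          norm_num [pow_succ]
        have h64' : (1/64:ℝ)^d ≤ (1/4:ℝ)^d := pow_le_pow_left₀ (by norm_num) (by norm_num) d
        have hM : 0 ≤ μ*Yb/A := by positivity
        have hcoef : (1/8:ℝ)^(2*(d+1)) + (1/8) * (1/4:ℝ)^d ≤ (1/4:ℝ)^(d+1) := by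
          rw [h64, pow_succ]
          nlinarith
        nlinarith [hcoef, hM]
      exact le_trans h0 (le_trans hstep hnum)
  -- early region bound
  set p := n-1-N with hpdef
  set G := μ*Yb*D + (1/4:ℝ)^p * (μ*Yb/A) with hGdef
  have hD0 : 0 < D := by
    have h1 := hD 0 (by omega)
    have h2 : 0 < (a (2*0+1))⁻¹ := by
      have := hpos 1 le_rfl
      norm_num
      linarith
    linarith
  have hG0 : 0 ≤ G := add_nonneg (mul_nonneg hμY hD0.le) (by positivity)
  have hearly : ∀ t, t ≤ N → |w (2*(N-t)+1)| ≤ (C+1)^t * G := by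
    intro t
    induction t with
    | zero =>
      intro _
      have h1 := hlate p le_rfl
      rw [show n-1-p = N from by omega] at h1
      rw [show N-0 = N from by omega, pow_zero, one_mul]
      refine le_trans h1 ?_
      have : 0 ≤ μ*Yb*D := mul_nonneg hμY hD0.le
      rw [hGdef]
      linarith
    | succ t ih =>
      intro ht1
      have ihb := ih (by omega)
      set i := N-(t+1) with hidef
      have hiN : i < N := by omega
      have hilt : i < n := by omega
      have h0 := habs i hilt
      have hxi : |w (2*i+3)| ≤ (C+1)^t * G := by
        rw [show 2*i+3 = 2*(N-t)+1 from by omega]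
        exact ihb
      have ha1 : 0 < a (2*i+1) := hpos _ (by omega)
      have hDi : (a (2*i+1))⁻¹ ≤ D := hD i hiN
      have hCi : a (2*i+2) ≤ C * a (2*i+1) := hC i hiN
      have t1 : μ*Yb/a (2*i+1) ≤ μ*Yb*D := by
        rw [div_eq_mul_inv]
        exact mul_le_mul_of_nonneg_left hDi hμY
      have t2 : a (2*i+2)*|w (2*i+3)|/a (2*i+1) ≤ C * ((C+1)^t * G) := by
        rw [div_le_iff₀ ha1]
        calc a (2*i+2)*|w (2*i+3)| ≤ (C * a (2*i+1)) * |w (2*i+3)| :=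
              mul_le_mul_of_nonneg_right hCi (abs_nonneg _)
          _ ≤ (C * a (2*i+1)) * ((C+1)^t * G) := by
              refine mul_le_mul_of_nonneg_left hxi (by positivity)
          _ = C * ((C+1)^t * G) * a (2*i+1) := by ring
      have hone : (1:ℝ) ≤ (C+1)^t := one_le_pow₀ (by linarith)
      have hmain : |w (2*i+1)| ≤ μ*Yb*D + C * ((C+1)^t * G) := by
        refine le_trans h0 ?_
        calc (μ*Yb + a (2*i+2)*|w (2*i+3)|)/a (2*i+1)
            = μ*Yb/a (2*i+1) + a (2*i+2)*|w (2*i+3)|/a (2*i+1) := by ring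
          _ ≤ _ := add_le_add t1 t2
      have hg1 : μ*Yb*D ≤ G := by
        rw [hGdef]
        have : (0:ℝ) ≤ (1/4:ℝ)^p * (μ*Yb/A) := by positivity
        linarith
      calc |w (2*i+1)| ≤ μ*Yb*D + C*((C+1)^t*G) := hmain
        _ ≤ G + C*((C+1)^t*G) := by linarith
        _ ≤ (C+1)^(t+1)*G := by
            have hexp : (C+1)^(t+1)*G = (C+1)^t*G + C*((C+1)^t*G) := by rw [pow_succ]; ring
            have hle : G ≤ (C+1)^t * G := le_mul_of_one_le_left hG0 hone
            rw [hexp]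
            linarith
  -- sum bounds
  set Tsum := ∑ i ∈ Finset.range n, |w (2*i+1)| with hTdef
  have hT0 : 0 ≤ Tsum := Finset.sum_nonneg fun i _ => abs_nonneg _
  have hT1 : ∑ i ∈ Finset.range N, |w (2*i+1)| ≤ (N:ℝ) * ((C+1)^N * G) := by
    have hb : ∀ i ∈ Finset.range N, |w (2*i+1)| ≤ (C+1)^N * G := by
      intro i hi
      rw [Finset.mem_range] at hi
      have h1 := hearly (N-i) (by omega)
      rw [show N-(N-i) = i from by omega] at h1
      refine le_trans h1 ?_
      refine mul_le_mul_of_nonneg_right ?_ hG0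
      exact pow_le_pow_right₀ (by linarith) (by omega)
    calc ∑ i ∈ Finset.range N, |w (2*i+1)| ≤ ∑ _i ∈ Finset.range N, ((C+1)^N * G) :=
        Finset.sum_le_sum hb
      _ = (N:ℝ) * ((C+1)^N * G) := by
          rw [Finset.sum_const, Finset.card_range, nsmul_eq_mul]
  have hgeom : ∑ d ∈ Finset.range n, (1/4:ℝ)^d ≤ 4/3 := by
    rw [geom_sum_eq (by norm_num : (1/4:ℝ) ≠ 1)]
    have h : (0:ℝ) ≤ (1/4:ℝ)^n := by positivity
    rw [div_le_iff_of_neg (by norm_num : (1/4:ℝ)-1 < 0)]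
    linarith
  have hT2 : ∑ i ∈ Finset.Ico N n, |w (2*i+1)| ≤ (4/3) * (μ*Yb/A) := by
    have hb : ∀ i ∈ Finset.Ico N n, |w (2*i+1)| ≤ (1/4:ℝ)^(n-1-i) * (μ*Yb/A) := by
      intro i hi
      rw [Finset.mem_Ico] at hi
      have h1 := hlate (n-1-i) (by omega)
      rwa [show n-1-(n-1-i) = i from by omega] at h1
    calc ∑ i ∈ Finset.Ico N n, |w (2*i+1)|
        ≤ ∑ i ∈ Finset.Ico N n, (1/4:ℝ)^(n-1-i) * (μ*Yb/A) := Finset.sum_le_sum hb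
      _ ≤ ∑ i ∈ Finset.range n, (1/4:ℝ)^(n-1-i) * (μ*Yb/A) := by
          refine Finset.sum_le_sum_of_subset_of_nonneg ?_ ?_
          · intro x hx
            rw [Finset.mem_Ico] at hx
            exact Finset.mem_range.mpr hx.2
          · intro i _ _
            positivity
      _ = (∑ i ∈ Finset.range n, (1/4:ℝ)^(n-1-i)) * (μ*Yb/A) := by rw [Finset.sum_mul]
      _ = (∑ d ∈ Finset.range n, (1/4:ℝ)^d) * (μ*Yb/A) := by
          rw [Finset.sum_range_reflect (fun d => (1/4:ℝ)^d) n]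
      _ ≤ (4/3) * (μ*Yb/A) := mul_le_mul_of_nonneg_right hgeom (by positivity)
  have hTsplit : ∑ i ∈ Finset.range N, |w (2*i+1)| + ∑ i ∈ Finset.Ico N n, |w (2*i+1)| = Tsum :=
    Finset.sum_range_add_sum_Ico _ (by omega : N ≤ n)
  have hAA : A * (μ*Yb/A) = μ*Yb := by field_simp
  have hsmall' : (N:ℝ) * ((C+1)^N * G) ≤ (1/15) * (μ*Yb/A) := by
    have hMA : 0 ≤ μ*Yb/A := by positivity
    have h2 := mul_le_mul_of_nonneg_right hsmall hMA
    have h3 : D * A * (μ*Yb/A) = μ*Yb*D := by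
      rw [mul_assoc, hAA]; ring
    have he : (N:ℝ) * (C+1)^N * (D * A + (1/4:ℝ)^p) * (μ*Yb/A) = (N:ℝ) * ((C+1)^N * G) := by
      calc (N:ℝ) * (C+1)^N * (D * A + (1/4:ℝ)^p) * (μ*Yb/A)
          = (N:ℝ) * (C+1)^N * (D * A * (μ*Yb/A)) + (N:ℝ) * (C+1)^N * ((1/4:ℝ)^p * (μ*Yb/A)) := by
            ring
        _ = (N:ℝ) * (C+1)^N * (μ*Yb*D) + (N:ℝ) * (C+1)^N * ((1/4:ℝ)^p * (μ*Yb/A)) := by rw [h3]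
        _ = (N:ℝ) * ((C+1)^N * G) := by rw [hGdef]; ring
    calc (N:ℝ) * ((C+1)^N * G) = (N:ℝ) * (C+1)^N * (D * A + (1/4:ℝ)^p) * (μ*Yb/A) := he.symm
      _ ≤ 1/15 * (μ*Yb/A) := h2
  have hTle : Tsum ≤ (7/5) * (μ*Yb/A) := by
    rw [← hTsplit]
    calc ∑ i ∈ Finset.range N, |w (2*i+1)| + ∑ i ∈ Finset.Ico N n, |w (2*i+1)|
        ≤ (N:ℝ) * ((C+1)^N * G) + (4/3) * (μ*Yb/A) := add_le_add hT1 hT2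
      _ ≤ (1/15) * (μ*Yb/A) + (4/3) * (μ*Yb/A) := by linarith [hsmall']
      _ = (7/5) * (μ*Yb/A) := by ring
  -- SX ≤ Tsum^2
  set SX := ∑ i ∈ Finset.range n, (w (2*i+1))^2 with hSXdef
  have hSXle : SX ≤ Tsum^2 := by
    have hb : ∀ i ∈ Finset.range n, (w (2*i+1))^2 ≤ |w (2*i+1)| * Tsum := by
      intro i hi
      have h1 : |w (2*i+1)| ≤ Tsum :=
        Finset.single_le_sum (f := fun i => |w (2*i+1)|) (fun i _ => abs_nonneg _) hi
      calc (w (2*i+1))^2 = |w (2*i+1)| * |w (2*i+1)| := by rw [← sq_abs, sq]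
        _ ≤ |w (2*i+1)| * Tsum := mul_le_mul_of_nonneg_left h1 (abs_nonneg _)
    calc SX ≤ ∑ i ∈ Finset.range n, |w (2*i+1)| * Tsum := Finset.sum_le_sum hb
      _ = Tsum * Tsum := by rw [← Finset.sum_mul]
      _ = Tsum^2 := (sq Tsum).symm
  -- parity identity
  have hterm : ∀ j ∈ Finset.range (2*n), (-1:ℝ)^(j+1) * (μ * (w (j+1))^2)
      = ((fun j => (-1:ℝ)^j * a j * w j * w (j+1)) (j+1)
        - (fun j => (-1:ℝ)^j * a j * w j * w (j+1)) j) := by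
    intro j hj
    rw [Finset.mem_range] at hj
    have hEj := hE (j+1) (by omega) (by omega)
    rw [show j+1-1 = j from by omega] at hEj
    show (-1:ℝ)^(j+1) * (μ * (w (j+1))^2)
      = (-1:ℝ)^(j+1) * a (j+1) * w (j+1) * w (j+1+1) - (-1:ℝ)^j * a j * w j * w (j+1)
    linear_combination ((-1:ℝ)^(j+1) * w (j+1)) * hEj
  have hzero : ∑ j ∈ Finset.range (2*n), (-1:ℝ)^(j+1) * (μ * (w (j+1))^2) = 0 := by
    rw [Finset.sum_congr rfl hterm,
      Finset.sum_range_sub (fun j => (-1:ℝ)^j * a j * w j * w (j+1)) (2*n)]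
    show (-1:ℝ)^(2*n) * a (2*n) * w (2*n) * w (2*n+1) - (-1:ℝ)^0 * a 0 * w 0 * w (0+1) = 0
    rw [hw0, hwm (2*n+1) (by omega)]
    ring
  have hsum0 : ∑ j ∈ Finset.range (2*n), (-1:ℝ)^(j+1) * (w (j+1))^2 = 0 := by
    have h1 : μ * ∑ j ∈ Finset.range (2*n), (-1:ℝ)^(j+1) * (w (j+1))^2 = 0 := by
      rw [Finset.mul_sum, ← hzero]
      refine Finset.sum_congr rfl ?_
      intro j _
      ring
    exact (mul_eq_zero.mp h1).resolve_left hμ.ne'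
  have hpar : SX = SY := by
    have hpair := sum_range_pair (fun j => (-1:ℝ)^(j+1) * (w (j+1))^2) n
    rw [hpair] at hsum0
    have hps : ∑ i ∈ Finset.range n,
        ((fun j => (-1:ℝ)^(j+1) * (w (j+1))^2) (2*i) + (fun j => (-1:ℝ)^(j+1) * (w (j+1))^2) (2*i+1))
        = SY - SX := by
      rw [hSYdef, hSXdef, ← Finset.sum_sub_distrib]
      refine Finset.sum_congr rfl ?_
      intro i _
      show (-1:ℝ)^(2*i+1) * (w (2*i+1))^2 + (-1:ℝ)^(2*i+1+1) * (w (2*i+1+1))^2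
        = w (2*i+2)^2 - w (2*i+1)^2
      have h1 : (-1:ℝ)^(2*i+1) = -1 := by
        rw [pow_succ, pow_mul]
        norm_num
      have h2 : (-1:ℝ)^(2*i+1+1) = 1 := by
        rw [pow_succ, h1]
        norm_num
      rw [h1, h2, show 2*i+1+1 = 2*i+2 from rfl]
      ring
    rw [hps] at hsum0
    linarith
  -- conclude SY = 0
  have hμA2 : μ / A ≤ 1/2 := by
    rw [div_le_iff₀ hA]
    linarith
  have hSY_le : SY ≤ (49/100) * SY := by
    have h1 : SY ≤ Tsum^2 := by rw [← hpar]; exact hSXle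
    have h2 : Tsum^2 ≤ ((7/5) * (μ*Yb/A))^2 := pow_le_pow_left₀ hT0 hTle 2
    have h3 : ((7/5) * (μ*Yb/A))^2 = (49/25) * (μ/A)^2 * Yb^2 := by ring
    have h4 : (μ/A)^2 ≤ 1/4 := by
      have := pow_le_pow_left₀ (by positivity : (0:ℝ) ≤ μ/A) hμA2 2
      norm_num at this
      linarith
    have h5 : (49/25) * (μ/A)^2 * Yb^2 ≤ (49/25) * (1/4) * Yb^2 := by nlinarith [sq_nonneg Yb]
    calc SY ≤ Tsum^2 := h1
      _ ≤ ((7/5) * (μ*Yb/A))^2 := h2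
      _ = (49/25) * (μ/A)^2 * Yb^2 := h3
      _ ≤ (49/25) * (1/4) * Yb^2 := h5
      _ = (49/100) * SY := by rw [hYb2]; ring
  have hSY : SY = 0 := by linarith
  -- all components vanish
  have hYzero : ∀ i, i < n → w (2*i+2) = 0 := by
    intro i hi
    have h1 := (Finset.sum_eq_zero_iff_of_nonneg (fun i _ => sq_nonneg (w (2*i+2)))).mp
      (by rw [← hSYdef]; exact hSY) i (Finset.mem_range.mpr hi)
    exact pow_eq_zero_iff (by norm_num) |>.mp h1
  have hXzero : ∀ i, i < n → w (2*i+1) = 0 := by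
    intro i hi
    have hEj := hE (2*i+1) (by omega) (by omega)
    rw [show 2*i+1-1 = 2*i from by omega, show 2*i+1+1 = 2*i+2 from rfl] at hEj
    have h2 : w (2*i+2) = 0 := hYzero i hi
    have h3 : w (2*i) = 0 := by
      rcases Nat.eq_zero_or_pos i with h | h
      · rw [h]; simpa using hw0
      · have := hYzero (i-1) (by omega)
        rwa [show 2*(i-1)+2 = 2*i from by omega] at this
    rw [h2, h3] at hEj
    simp at hEj
    rcases hEj with h | h
    · exact absurd h hμ.ne'
    · exact h
  obtain ⟨J, hJ1, hJ2, hJne⟩ := hwne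
  rcases Nat.even_or_odd J with ⟨l, hl⟩ | ⟨l, hl⟩
  · refine hJne ?_
    have hl1 : 1 ≤ l := by omega
    have := hYzero (l-1) (by omega)
    rwa [show 2*(l-1)+2 = J from by omega] at this
  · refine hJne ?_
    have := hXzero l (by omega)
    rwa [show 2*l+1 = J from by omega] at this

lemma chain_decay (a : ℕ → ℝ) (N : ℕ) (hdec : ∀ k, N ≤ k → a (k+1) ≤ a k / 8) :
    ∀ k, N ≤ k → ∀ s, a (k+s) ≤ (1/8:ℝ)^s * a k := by
  intro k hk s
  induction s with
  | zero => simp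
  | succ s ih =>
    have h1 : a (k+s+1) ≤ a (k+s) / 8 := hdec _ (by omega)
    have h2 : a (k+s) / 8 ≤ ((1/8:ℝ)^s * a k) / 8 := by linarith
    calc a (k+(s+1)) = a (k+s+1) := by ring_nf
      _ ≤ ((1/8:ℝ)^s * a k) / 8 := le_trans h1 h2
      _ = (1/8:ℝ)^(s+1) * a k := by ring

lemma key (a : ℕ → ℝ) (N n : ℕ) (C D μ : ℝ)
    (hpos : ∀ j, 1 ≤ j → 0 < a j)
    (hdec : ∀ k, N ≤ k → a (k+1) ≤ a k / 8)
    (hC : ∀ i, i < N → a (2*i+2) ≤ C * a (2*i+1)) (hC0 : 0 ≤ C)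
    (hD : ∀ i, i < N → (a (2*i+1))⁻¹ ≤ D)
    (hN : 1 ≤ N) (hn : N + 1 ≤ n)
    (hμ : 0 < μ) (hμA : μ ≤ a (2*n-1) / 2)
    (hsmall : (N:ℝ) * (C+1)^N * (D * a (2*n-1) + (1/4:ℝ)^(n-1-N)) ≤ 1/15)
    (heig : Module.End.HasEigenvalue (Matrix.toLin' (tridiag a (2*n))) μ) : False := by
  classical
  obtain ⟨v, hv⟩ := heig.exists_hasEigenvector
  have happ : (tridiag a (2*n)).mulVec v = μ • v := by
    have h := hv.apply_eq_smul
    rwa [Matrix.toLin'_apply] at h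
  set w : ℕ → ℝ := fun k => if h : 1 ≤ k ∧ k ≤ 2*n then v ⟨k-1, by omega⟩ else 0 with hwdef
  have hw : ∀ k (h : k < 2*n), w (k+1) = v ⟨k, h⟩ := by
    intro k h
    rw [hwdef]
    simp only
    rw [dif_pos ⟨by omega, by omega⟩]
    exact congrArg v (Fin.ext (by simp))
  have hwm : ∀ k, 2*n < k → w k = 0 := by
    intro k hk
    rw [hwdef]
    simp only
    rw [dif_neg (by omega)]
  have hw0 : w 0 = 0 := by
    rw [hwdef]
    simp only
    rw [dif_neg (by omega)]
  have hE : ∀ J, 1 ≤ J → J ≤ 2*n → μ * w J = a J * w (J+1) + a (J-1) * w (J-1) := by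
    intro J h1 h2
    have hJlt : J-1 < 2*n := by omega
    have hrow := congrFun happ ⟨J-1, hJlt⟩
    rw [tridiag_mulVec a (2*n) v w hw hwm hw0 ⟨J-1, hJlt⟩] at hrow
    simp only [Pi.smul_apply, smul_eq_mul] at hrow
    rw [show J-1+1 = J from by omega, show J-1+2 = J+1 from by omega] at hrow
    have hv' : v ⟨J-1, hJlt⟩ = w J := by
      rw [← hw (J-1) hJlt, show J-1+1 = J from by omega]
    rw [hv'] at hrow
    linarith [hrow]
  have hwne : ∃ J, 1 ≤ J ∧ J ≤ 2*n ∧ w J ≠ 0 := by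
    have hvne := hv.right
    have hex : ∃ j : Fin (2*n), v j ≠ 0 := by
      by_contra h
      push_neg at h
      exact hvne (funext h)
    obtain ⟨j, hj⟩ := hex
    refine ⟨(j:ℕ)+1, by omega, by have := j.isLt; omega, ?_⟩
    rw [hw (j:ℕ) j.isLt]
    simpa using hj
  exact scalar_key a N n C D μ w hpos hdec hC hC0 hD hN hn hμ hμA hsmall hw0 hwm hE hwne

/-- If a_{n+1}/a_n → 0 and, for each n, `lam n 1 > lam n 2 > ⋯ > lam n n > 0` are the
positive eigenvalues of T_{2n} (so that ∏_{k=1}^n lam n k = ∏_{k=1}^n a_{2k-1}), then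
lam k k ≥ a_{2k-1}/2 for infinitely many k. -/
theorem eigen_lower_bound_frequently (a : ℕ → ℝ) (hpos : ∀ n, 1 ≤ n → 0 < a n)
    (hratio : Tendsto (fun n => a (n + 1) / a n) atTop (nhds 0))
    (lam : ℕ → ℕ → ℝ)
    (hlpos : ∀ n k, 1 ≤ k → k ≤ n → 0 < lam n k)
    (hstrict : ∀ n j k, 1 ≤ j → j < k → k ≤ n → lam n k < lam n j)
    (heig : ∀ n k, 1 ≤ k → k ≤ n →
      Module.End.HasEigenvalue (Matrix.toLin' (tridiag a (2 * n))) (lam n k))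
    (hspec : ∀ n (μ : ℝ), 0 < μ →
      Module.End.HasEigenvalue (Matrix.toLin' (tridiag a (2 * n))) μ →
      ∃ k, 1 ≤ k ∧ k ≤ n ∧ μ = lam n k)
    (hprod : ∀ n, ∏ k ∈ Finset.Icc 1 n, lam n k = ∏ k ∈ Finset.Icc 1 n, a (2 * k - 1)) :
    ∃ᶠ k in atTop, a (2 * k - 1) / 2 ≤ lam k k := by
  have h8 : ∀ᶠ k in atTop, a (k+1) / a k < 1/8 :=
    hratio.eventually (gt_mem_nhds (by norm_num))
  obtain ⟨N₀, hN₀⟩ := eventually_atTop.mp h8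
  set N := max N₀ 1 with hNdef
  have hN1 : 1 ≤ N := le_max_right _ _
  have hdec : ∀ k, N ≤ k → a (k+1) ≤ a k / 8 := by
    intro k hk
    have hk1 : 1 ≤ k := le_trans hN1 hk
    have h := hN₀ k (le_trans (le_max_left _ _) hk)
    have hak : 0 < a k := hpos k hk1
    rw [div_lt_iff₀ hak] at h
    linarith
  set C := ∑ i ∈ Finset.range N, a (2*i+2) / a (2*i+1) with hCdef
  have hC0 : 0 ≤ C := Finset.sum_nonneg fun i _ => by
    have h1 := hpos (2*i+1) (by omega)
    have h2 := hpos (2*i+2) (by omega)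
    positivity
  have hC : ∀ i, i < N → a (2*i+2) ≤ C * a (2*i+1) := by
    intro i hi
    have h1 := hpos (2*i+1) (by omega)
    have hsingle : a (2*i+2)/a (2*i+1) ≤ C :=
      Finset.single_le_sum (f := fun i => a (2*i+2)/a (2*i+1))
        (fun j _ => by
          have hj1 := hpos (2*j+1) (by omega)
          have hj2 := hpos (2*j+2) (by omega)
          positivity)
        (Finset.mem_range.mpr hi)
    rw [div_le_iff₀ h1] at hsingle
    exact hsingle
  set D := ∑ i ∈ Finset.range N, (a (2*i+1))⁻¹ with hDdef
  have hD0 : 0 ≤ D := Finset.sum_nonneg fun i _ => by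
    have h1 := hpos (2*i+1) (by omega)
    positivity
  have hD : ∀ i, i < N → (a (2*i+1))⁻¹ ≤ D := fun i hi =>
    Finset.single_le_sum (f := fun i => (a (2*i+1))⁻¹)
      (fun j _ => by
        have hj1 := hpos (2*j+1) (by omega)
        positivity)
      (Finset.mem_range.mpr hi)
  set K0 := (N:ℝ) * (C+1)^N with hK0def
  have hK00 : 0 ≤ K0 := by positivity
  have hchain := chain_decay a N hdec
  have haN : 0 < a N := hpos N hN1
  have ev1 : ∀ᶠ n in atTop, K0 * (D * a (2*n-1)) ≤ 1/30 := by
    have ht : Tendsto (fun n : ℕ => K0 * D * a N * (1/8:ℝ)^n) atTop (nhds 0) := by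
      have hp : Tendsto (fun n : ℕ => (1/8:ℝ)^n) atTop (nhds 0) :=
        tendsto_pow_atTop_nhds_zero_of_lt_one (by norm_num) (by norm_num)
      simpa using hp.const_mul (K0 * D * a N)
    have hev := ht.eventually (eventually_le_nhds (by norm_num : (0:ℝ) < 1/30))
    filter_upwards [hev, eventually_ge_atTop (N+1)] with n h1 h2
    have hb : a (2*n-1) ≤ (1/8:ℝ)^n * a N := by
      have hc := hchain N le_rfl (2*n-1-N)
      rw [show N + (2*n-1-N) = 2*n-1 from by omega] at hc
      refine le_trans hc ?_
      have hple : (1/8:ℝ)^(2*n-1-N) ≤ (1/8:ℝ)^n :=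
        pow_le_pow_of_le_one (by norm_num) (by norm_num) (by omega)
      exact mul_le_mul_of_nonneg_right hple haN.le
    calc K0 * (D * a (2*n-1)) ≤ K0 * (D * ((1/8:ℝ)^n * a N)) :=
        mul_le_mul_of_nonneg_left (mul_le_mul_of_nonneg_left hb hD0) hK00
      _ = K0 * D * a N * (1/8:ℝ)^n := by ring
      _ ≤ 1/30 := h1
  have ev2 : ∀ᶠ n in atTop, K0 * (1/4:ℝ)^(n-1-N) ≤ 1/30 := by
    have ht : Tendsto (fun n : ℕ => K0 * (1/4:ℝ)^(n-1-N)) atTop (nhds 0) := by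
      have h1 : Tendsto (fun s : ℕ => (1/4:ℝ)^s) atTop (nhds 0) :=
        tendsto_pow_atTop_nhds_zero_of_lt_one (by norm_num) (by norm_num)
      have h2 : Tendsto (fun n : ℕ => n - 1 - N) atTop atTop := by
        have := tendsto_sub_atTop_nat (1+N)
        refine this.congr ?_
        intro n
        omega
      simpa using (h1.comp h2).const_mul K0
    exact ht.eventually (eventually_le_nhds (by norm_num : (0:ℝ) < 1/30))
  have hfinal : ∀ᶠ k in atTop, a (2*k-1)/2 ≤ lam k k := by
    filter_upwards [ev1, ev2, eventually_ge_atTop (N+1)] with n h1 h2 hn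
    by_contra hlt
    push_neg at hlt
    have hk1 : 1 ≤ n := by omega
    refine key a N n C D (lam n n) hpos hdec hC hC0 hD hN1 hn (hlpos n n hk1 le_rfl) hlt.le
      ?_ (heig n n hk1 le_rfl)
    calc (N:ℝ)*(C+1)^N * (D*a (2*n-1) + (1/4:ℝ)^(n-1-N))
        = K0*(D*a (2*n-1)) + K0*(1/4:ℝ)^(n-1-N) := by rw [hK0def]; ring
      _ ≤ 1/30 + 1/30 := add_le_add h1 h2
      _ ≤ 1/15 := by norm_num
  exact hfinal.frequently
end
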